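/- For all x < x₀, all n ∈ ℕ, and all k ∈ {0,…,n}: |g_n(x)| ≥ |g_{n−k}(x)| · |g_k(x)|. In particular |g_n(x)| ≥ |g_1(x)|^n. -/

import Mathlib

open MeasureTheory Set Finset

/-- The jump of `g` at `x`: `Δg(x) = g(x⁺) − g(x)`. -/
noncomputable def jumpOf (g : ℝ → ℝ) (x : ℝ) : ℝ := Function.rightLim g x - g x

/-- Oriented Lebesgue–Stieltjes integral: `∫_a^b f dμ = ∫_{[a,b)} f dμ` if `a ≤ b`,
`= −∫_{[b,a)} f dμ` otherwise. -/
noncomputable def ointeg (μ : MeasureTheory.Measure ℝ) (f : ℝ → ℝ) (a b : ℝ) : ℝ :=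
  if a ≤ b then ∫ s in Set.Ico a b, f s ∂μ else - ∫ s in Set.Ico b a, f s ∂μ

/-- The `g`-monomials centered at `c`, defined from the Lebesgue–Stieltjes measure `μ` of `g`:
`g_0 ≡ 1`, `g_{n+1}(x) = (n+1) ∫_c^x g_n dμ` (oriented). -/
noncomputable def gMon (μ : MeasureTheory.Measure ℝ) (c : ℝ) : ℕ → ℝ → ℝ
  | 0 => fun _ => 1
  | n + 1 => fun x => ((n : ℝ) + 1) * ointeg μ (gMon μ c n) c x


noncomputable def negMon (μ : MeasureTheory.Measure ℝ) (x₀ : ℝ) (n : ℕ) (x : ℝ) : ℝ :=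
  (-1 : ℝ) ^ n * gMon μ x₀ n x

lemma negMon_zero (μ : MeasureTheory.Measure ℝ) (x₀ x : ℝ) : negMon μ x₀ 0 x = 1 := by
  simp [negMon, gMon]

lemma abs_gMon (μ : MeasureTheory.Measure ℝ) (x₀ : ℝ) (n : ℕ) (x : ℝ) :
    |gMon μ x₀ n x| = |negMon μ x₀ n x| := by
  simp [negMon, abs_mul, abs_pow]

lemma negMon_succ (μ : MeasureTheory.Measure ℝ) {x₀ : ℝ} (n : ℕ) {x : ℝ} (hx : x < x₀) :
    negMon μ x₀ (n+1) x = ((n : ℝ) + 1) * ∫ s in Set.Ico x x₀, negMon μ x₀ n s ∂μ := by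
  simp only [negMon, gMon, ointeg, if_neg (not_le.mpr hx)]
  rw [MeasureTheory.integral_const_mul]
  ring

lemma negMon_props {μ : MeasureTheory.Measure ℝ} {x₀ : ℝ}
    (hfin : ∀ x, x < x₀ → μ (Set.Ico x x₀) ≠ ⊤) (n : ℕ) :
    (∀ x ∈ Set.Iio x₀, 0 ≤ negMon μ x₀ n x) ∧ AntitoneOn (negMon μ x₀ n) (Set.Iio x₀) ∧
      (∀ x ∈ Set.Iio x₀, IntegrableOn (negMon μ x₀ n) (Set.Ico x x₀) μ) := by
  induction n with
  | zero =>
    refine ⟨fun x _ => by simp [negMon_zero], fun a _ b _ _ => by simp [negMon_zero],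
      fun x hx => ?_⟩
    have : negMon μ x₀ 0 = fun _ => (1:ℝ) := funext fun s => negMon_zero μ x₀ s
    rw [this]
    exact integrableOn_const (hfin x hx)
  | succ n ih =>
    obtain ⟨h0, h1, h2⟩ := ih
    have hnn : ∀ x ∈ Set.Iio x₀, 0 ≤ negMon μ x₀ (n+1) x := by
      intro x hx
      rw [negMon_succ μ n hx]
      exact mul_nonneg (by positivity)
        (setIntegral_nonneg measurableSet_Ico fun s hs => h0 s hs.2)
    have hanti : AntitoneOn (negMon μ x₀ (n+1)) (Set.Iio x₀) := by
      intro a ha b hb hab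
      rw [negMon_succ μ n ha, negMon_succ μ n hb]
      have : (∫ s in Set.Ico b x₀, negMon μ x₀ n s ∂μ)
          ≤ ∫ s in Set.Ico a x₀, negMon μ x₀ n s ∂μ := by
        apply setIntegral_mono_set (h2 a ha)
        · exact (ae_restrict_iff' measurableSet_Ico).2 (ae_of_all _ fun s hs => h0 s hs.2)
        · exact HasSubset.Subset.eventuallyLE (Set.Ico_subset_Ico_left hab)
      exact mul_le_mul_of_nonneg_left this (by positivity)
    refine ⟨hnn, hanti, fun x hx => ?_⟩
    haveI : IsFiniteMeasure (μ.restrict (Set.Ico x x₀)) :=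
      ⟨by rw [Measure.restrict_apply_univ]; exact lt_top_iff_ne_top.2 (hfin x hx)⟩
    refine Integrable.mono' (integrable_const (negMon μ x₀ (n+1) x))
      (aemeasurable_restrict_of_antitoneOn measurableSet_Ico
        (hanti.mono Set.Ico_subset_Iio_self)).aestronglyMeasurable ?_
    refine (ae_restrict_iff' measurableSet_Ico).2 (ae_of_all _ fun s hs => ?_)
    rw [Real.norm_eq_abs, abs_of_nonneg (hnn s hs.2)]
    exact hanti hx hs.2 hs.1

open ENNReal

lemma N_succ {μ : MeasureTheory.Measure ℝ} {x₀ : ℝ}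
    (hfin : ∀ x, x < x₀ → μ (Set.Ico x x₀) ≠ ⊤) (n : ℕ) {x : ℝ} (hx : x < x₀) :
    ENNReal.ofReal (negMon μ x₀ (n+1) x)
      = ((n : ℝ≥0∞) + 1) * ∫⁻ s in Set.Ico x x₀, ENNReal.ofReal (negMon μ x₀ n s) ∂μ := by
  obtain ⟨h0, h1, h2⟩ := negMon_props hfin n
  rw [negMon_succ μ n hx, ENNReal.ofReal_mul (by positivity),
    MeasureTheory.ofReal_integral_eq_lintegral_ofReal (h2 x hx)
      ((ae_restrict_iff' measurableSet_Ico).2 (ae_of_all _ fun s hs => h0 s hs.2))]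
  congr 1
  rw [ENNReal.ofReal_add (by positivity) zero_le_one]
  simp

lemma N_meas {μ : MeasureTheory.Measure ℝ} {x₀ : ℝ}
    (hfin : ∀ x, x < x₀ → μ (Set.Ico x x₀) ≠ ⊤) (n : ℕ) {x : ℝ} (hx : x < x₀) :
    AEMeasurable (fun s => ENNReal.ofReal (negMon μ x₀ n s)) (μ.restrict (Set.Ico x x₀)) :=
  (aemeasurable_restrict_of_antitoneOn measurableSet_Ico
    ((negMon_props hfin n).2.1.mono Set.Ico_subset_Iio_self)).ennreal_ofReal

lemma N_lint_fin {μ : MeasureTheory.Measure ℝ} {x₀ : ℝ}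
    (hfin : ∀ x, x < x₀ → μ (Set.Ico x x₀) ≠ ⊤) (n : ℕ) {x : ℝ} (hx : x < x₀) :
    (∫⁻ s in Set.Ico x x₀, ENNReal.ofReal (negMon μ x₀ n s) ∂μ) ≠ ⊤ := by
  obtain ⟨h0, h1, h2⟩ := negMon_props hfin n
  have hb : (∫⁻ s in Set.Ico x x₀, ENNReal.ofReal (negMon μ x₀ n s) ∂μ)
      ≤ ∫⁻ _ in Set.Ico x x₀, ENNReal.ofReal (negMon μ x₀ n x) ∂μ := by
    refine lintegral_mono_ae ?_
    filter_upwards [ae_restrict_mem measurableSet_Ico] with s hs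
    exact ENNReal.ofReal_le_ofReal (h1 hx hs.2 hs.1)
  refine ne_top_of_le_ne_top ?_ hb
  rw [MeasureTheory.lintegral_const, Measure.restrict_apply_univ]
  exact ENNReal.mul_ne_top ENNReal.ofReal_ne_top (hfin x hx)
lemma fub_aux (ν : Measure ℝ) [IsFiniteMeasure ν] {Φ Ψ : ℝ → ℝ≥0∞}
    (hΦ : AEMeasurable Φ ν) (hΨ : AEMeasurable Ψ ν) (hΦf : ∀ s, Φ s ≠ ⊤) :
    (∫⁻ s, Φ s * ∫⁻ t in Set.Iio s, Ψ t ∂ν ∂ν)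
      = ∫⁻ p : ℝ × ℝ, (Φ p.1 * Ψ p.2) * ({q : ℝ × ℝ | q.2 < q.1}.indicator 1 p) ∂(ν.prod ν) := by
  have hmes : AEMeasurable
      (Function.uncurry fun s t => (Φ s * Ψ t) * ({q : ℝ × ℝ | q.2 < q.1}.indicator 1 (s, t)))
      (ν.prod ν) := by
    have : AEMeasurable (fun p : ℝ × ℝ =>
        (Φ p.1 * Ψ p.2) * ({q : ℝ × ℝ | q.2 < q.1}.indicator 1 p)) (ν.prod ν) :=
      (hΦ.comp_fst.fun_mul hΨ.comp_snd).fun_mul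
        ((measurable_one.indicator (measurableSet_lt measurable_snd measurable_fst)).aemeasurable)
    exact this
  rw [← MeasureTheory.lintegral_lintegral hmes]
  refine lintegral_congr fun s => ?_
  rw [← lintegral_indicator measurableSet_Iio, ← lintegral_const_mul' _ _ (hΦf s)]
  refine lintegral_congr fun t => ?_
  by_cases h : t < s
  · simp [Set.indicator, Set.mem_Iio, Set.mem_setOf_eq, h]
  · simp [Set.indicator, Set.mem_Iio, Set.mem_setOf_eq, h]

lemma fub (ν : Measure ℝ) [IsFiniteMeasure ν] {Φ Ψ : ℝ → ℝ≥0∞}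
    (hΦ : AEMeasurable Φ ν) (hΨ : AEMeasurable Ψ ν)
    (hΦf : ∀ s, Φ s ≠ ⊤) (hΨf : ∀ s, Ψ s ≠ ⊤) :
    (∫⁻ s, Φ s * ∫⁻ t in Set.Iio s, Ψ t ∂ν ∂ν) + (∫⁻ t, Ψ t * ∫⁻ s in Set.Iio t, Φ s ∂ν ∂ν)
      ≤ (∫⁻ s, Φ s ∂ν) * (∫⁻ t, Ψ t ∂ν) := by
  rw [fub_aux ν hΦ hΨ hΦf, fub_aux ν hΨ hΦ hΨf]
  have swap : (∫⁻ p : ℝ × ℝ, (Ψ p.1 * Φ p.2) * ({q : ℝ × ℝ | q.2 < q.1}.indicator 1 p) ∂(ν.prod ν))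
      = ∫⁻ p : ℝ × ℝ, (Φ p.1 * Ψ p.2) * ({q : ℝ × ℝ | q.1 < q.2}.indicator 1 p) ∂(ν.prod ν) := by
    rw [← MeasureTheory.lintegral_prod_swap
      (fun p : ℝ × ℝ => (Ψ p.1 * Φ p.2) * ({q : ℝ × ℝ | q.2 < q.1}.indicator 1 p))]
    refine lintegral_congr fun p => ?_
    by_cases h : p.1 < p.2
    · simp [Set.indicator, Set.mem_setOf_eq, h, mul_comm]
    · simp [Set.indicator, Set.mem_setOf_eq, h]
  rw [swap]
  have hmes1 : AEMeasurable (fun p : ℝ × ℝ =>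
      (Φ p.1 * Ψ p.2) * ({q : ℝ × ℝ | q.2 < q.1}.indicator 1 p)) (ν.prod ν) :=
    (hΦ.comp_fst.fun_mul hΨ.comp_snd).fun_mul
      ((measurable_one.indicator (measurableSet_lt measurable_snd measurable_fst)).aemeasurable)
  rw [← lintegral_add_left' hmes1]
  calc (∫⁻ p : ℝ × ℝ, ((Φ p.1 * Ψ p.2) * ({q : ℝ × ℝ | q.2 < q.1}.indicator 1 p)
          + (Φ p.1 * Ψ p.2) * ({q : ℝ × ℝ | q.1 < q.2}.indicator 1 p)) ∂(ν.prod ν))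
      ≤ ∫⁻ p : ℝ × ℝ, Φ p.1 * Ψ p.2 ∂(ν.prod ν) := by
        refine lintegral_mono fun p => ?_
        rw [← mul_add]
        have h1 : ({q : ℝ × ℝ | q.2 < q.1}.indicator 1 p
            + {q : ℝ × ℝ | q.1 < q.2}.indicator 1 p : ℝ≥0∞) ≤ 1 := by
          rcases lt_trichotomy p.1 p.2 with h | h | h
          · simp [Set.indicator, Set.mem_setOf_eq, h, asymm h]
          · simp [Set.indicator, Set.mem_setOf_eq, h]
          · simp [Set.indicator, Set.mem_setOf_eq, h, asymm h]
        calc Φ p.1 * Ψ p.2 * ({q : ℝ × ℝ | q.2 < q.1}.indicator 1 p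
              + {q : ℝ × ℝ | q.1 < q.2}.indicator 1 p)
            ≤ Φ p.1 * Ψ p.2 * 1 := mul_le_mul_right h1 _
          _ = Φ p.1 * Ψ p.2 := mul_one _
    _ = (∫⁻ s, Φ s ∂ν) * (∫⁻ t, Ψ t ∂ν) := lintegral_prod_mul hΦ hΨ

lemma N_mul {μ : MeasureTheory.Measure ℝ} {x₀ : ℝ}
    (hfin : ∀ x, x < x₀ → μ (Set.Ico x x₀) ≠ ⊤) :
    ∀ n k m : ℕ, k + m = n → ∀ x : ℝ, x < x₀ →
      ENNReal.ofReal (negMon μ x₀ k x) * ENNReal.ofReal (negMon μ x₀ m x)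
        ≤ ENNReal.ofReal (negMon μ x₀ n x) := by
  intro n
  induction n using Nat.strong_induction_on with
  | _ n IH =>
    intro k m hkm x hx
    rcases k with _ | k'
    · subst hkm; simp [negMon_zero]
    rcases m with _ | m'
    · subst hkm; simp [negMon_zero]
    subst hkm
    haveI : IsFiniteMeasure (μ.restrict (Set.Ico x x₀)) :=
      ⟨by rw [Measure.restrict_apply_univ]; exact lt_top_iff_ne_top.2 (hfin x hx)⟩
    have key : ∀ a b : ℕ, a + (b+1) = k' + m' + 1 →
        ((b:ℝ≥0∞)+1) * ((∫⁻ s in Set.Ico x x₀, ENNReal.ofReal (negMon μ x₀ a s) ∂μ)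
            * (∫⁻ t in Set.Ico x x₀, ENNReal.ofReal (negMon μ x₀ b t) ∂μ))
          ≤ ((b:ℝ≥0∞)+1) * (∫⁻ s in Set.Ico x x₀, ENNReal.ofReal (negMon μ x₀ a s)
                * (∫⁻ t in Set.Iio s,
                    ENNReal.ofReal (negMon μ x₀ b t) ∂(μ.restrict (Set.Ico x x₀))) ∂μ)
            + ∫⁻ s in Set.Ico x x₀, ENNReal.ofReal (negMon μ x₀ (k'+m'+1) s) ∂μ := by
      intro a b hab
      have hb1 : ((b:ℝ≥0∞)+1) ≠ ⊤ :=
        ENNReal.add_ne_top.2 ⟨ENNReal.natCast_ne_top b, ENNReal.one_ne_top⟩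
      have hcfin : ((b:ℝ≥0∞)+1)
          * (∫⁻ t in Set.Ico x x₀, ENNReal.ofReal (negMon μ x₀ b t) ∂μ) ≠ ⊤ :=
        ENNReal.mul_ne_top hb1 (N_lint_fin hfin b hx)
      have step1 : ((b:ℝ≥0∞)+1) * ((∫⁻ s in Set.Ico x x₀, ENNReal.ofReal (negMon μ x₀ a s) ∂μ)
          * (∫⁻ t in Set.Ico x x₀, ENNReal.ofReal (negMon μ x₀ b t) ∂μ))
          = ∫⁻ s in Set.Ico x x₀, ENNReal.ofReal (negMon μ x₀ a s)
              * (((b:ℝ≥0∞)+1) * ∫⁻ t in Set.Ico x x₀, ENNReal.ofReal (negMon μ x₀ b t) ∂μ) ∂μ := by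
        rw [lintegral_mul_const' _ _ hcfin]; ring
      have step2 : ∀ᵐ s ∂(μ.restrict (Set.Ico x x₀)),
          ENNReal.ofReal (negMon μ x₀ a s)
              * (((b:ℝ≥0∞)+1) * ∫⁻ t in Set.Ico x x₀, ENNReal.ofReal (negMon μ x₀ b t) ∂μ)
            = ((b:ℝ≥0∞)+1) * (ENNReal.ofReal (negMon μ x₀ a s)
                  * ∫⁻ t in Set.Iio s,
                      ENNReal.ofReal (negMon μ x₀ b t) ∂(μ.restrict (Set.Ico x x₀)))
              + ENNReal.ofReal (negMon μ x₀ a s) * ENNReal.ofReal (negMon μ x₀ (b+1) s) := by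
        filter_upwards [ae_restrict_mem measurableSet_Ico] with s hs
        have hsplit : (∫⁻ t in Set.Ico x x₀, ENNReal.ofReal (negMon μ x₀ b t) ∂μ)
            = (∫⁻ t in Set.Iio s,
                  ENNReal.ofReal (negMon μ x₀ b t) ∂(μ.restrict (Set.Ico x x₀)))
              + ∫⁻ t in Set.Ico s x₀, ENNReal.ofReal (negMon μ x₀ b t) ∂μ := by
          rw [← lintegral_add_compl (fun t => ENNReal.ofReal (negMon μ x₀ b t))
            (measurableSet_Iio (a := s)) (μ := μ.restrict (Set.Ico x x₀))]
          have hset : Set.Ici s ∩ Set.Ico x x₀ = Set.Ico s x₀ := by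
            ext t
            simp only [Set.mem_inter_iff, Set.mem_Ici, Set.mem_Ico]
            constructor
            · rintro ⟨h1, _, h3⟩; exact ⟨h1, h3⟩
            · rintro ⟨h1, h2⟩; exact ⟨h1, hs.1.trans h1, h2⟩
          congr 1
          rw [compl_Iio, Measure.restrict_restrict measurableSet_Ici, hset]
        have hNb : ENNReal.ofReal (negMon μ x₀ (b+1) s)
            = ((b:ℝ≥0∞)+1) * ∫⁻ t in Set.Ico s x₀, ENNReal.ofReal (negMon μ x₀ b t) ∂μ :=
          N_succ hfin b hs.2
        rw [hsplit, mul_add, hNb]; ring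
      rw [step1, lintegral_congr_ae step2,
        lintegral_add_right' _ ((N_meas hfin a hx).fun_mul (N_meas hfin (b+1) hx)),
        lintegral_const_mul' ((b:ℝ≥0∞)+1) _ hb1]
      refine add_le_add_right ?_ _
      refine lintegral_mono_ae ?_
      filter_upwards [ae_restrict_mem measurableSet_Ico] with s hs
      exact IH (k'+m'+1) (by omega) a (b+1) hab s hs.2
    have hzk := key k' m' (by omega)
    have hzm := key m' k' (by omega)
    have hfub := fub (μ.restrict (Set.Ico x x₀)) (N_meas hfin k' hx) (N_meas hfin m' hx)
      (fun _ => ENNReal.ofReal_ne_top) (fun _ => ENNReal.ofReal_ne_top)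
    have hNk : ENNReal.ofReal (negMon μ x₀ (k'+1) x)
        = ((k':ℝ≥0∞)+1) * ∫⁻ s in Set.Ico x x₀, ENNReal.ofReal (negMon μ x₀ k' s) ∂μ :=
      N_succ hfin k' hx
    have hNm : ENNReal.ofReal (negMon μ x₀ (m'+1) x)
        = ((m':ℝ≥0∞)+1) * ∫⁻ t in Set.Ico x x₀, ENNReal.ofReal (negMon μ x₀ m' t) ∂μ :=
      N_succ hfin m' hx
    have hNn : ENNReal.ofReal (negMon μ x₀ (k'+1+(m'+1)) x)
        = (((k'+m'+1 : ℕ):ℝ≥0∞)+1)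
            * ∫⁻ s in Set.Ico x x₀, ENNReal.ofReal (negMon μ x₀ (k'+m'+1) s) ∂μ := by
      have h : k'+1+(m'+1) = (k'+m'+1)+1 := by omega
      rw [h]; exact N_succ hfin (k'+m'+1) hx
    rw [hNk, hNm, hNn]
    set LΦ := ∫⁻ s in Set.Ico x x₀, ENNReal.ofReal (negMon μ x₀ k' s) ∂μ with hLΦdef
    set LΨ := ∫⁻ t in Set.Ico x x₀, ENNReal.ofReal (negMon μ x₀ m' t) ∂μ with hLΨdef
    set J := ∫⁻ s in Set.Ico x x₀, ENNReal.ofReal (negMon μ x₀ (k'+m'+1) s) ∂μ with hJdef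
    set T1 := ∫⁻ s in Set.Ico x x₀, ENNReal.ofReal (negMon μ x₀ k' s)
        * (∫⁻ t in Set.Iio s,
            ENNReal.ofReal (negMon μ x₀ m' t) ∂(μ.restrict (Set.Ico x x₀))) ∂μ with hT1def
    set T2 := ∫⁻ t in Set.Ico x x₀, ENNReal.ofReal (negMon μ x₀ m' t)
        * (∫⁻ s in Set.Iio t,
            ENNReal.ofReal (negMon μ x₀ k' s) ∂(μ.restrict (Set.Ico x x₀))) ∂μ with hT2def
    have hX : (((k':ℝ≥0∞)+1) * LΦ) * (((m':ℝ≥0∞)+1) * LΨ) ≠ ⊤ :=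
      ENNReal.mul_ne_top
        (ENNReal.mul_ne_top (ENNReal.add_ne_top.2 ⟨ENNReal.natCast_ne_top k', ENNReal.one_ne_top⟩)
          (N_lint_fin hfin k' hx))
        (ENNReal.mul_ne_top (ENNReal.add_ne_top.2 ⟨ENNReal.natCast_ne_top m', ENNReal.one_ne_top⟩)
          (N_lint_fin hfin m' hx))
    refine (ENNReal.add_le_add_iff_left hX).1 ?_
    calc (((k':ℝ≥0∞)+1) * LΦ) * (((m':ℝ≥0∞)+1) * LΨ)
          + (((k':ℝ≥0∞)+1) * LΦ) * (((m':ℝ≥0∞)+1) * LΨ)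
        = ((k':ℝ≥0∞)+1) * (((m':ℝ≥0∞)+1) * (LΦ * LΨ))
          + ((m':ℝ≥0∞)+1) * (((k':ℝ≥0∞)+1) * (LΨ * LΦ)) := by ring
      _ ≤ ((k':ℝ≥0∞)+1) * (((m':ℝ≥0∞)+1) * T1 + J)
          + ((m':ℝ≥0∞)+1) * (((k':ℝ≥0∞)+1) * T2 + J) :=
        add_le_add (mul_le_mul_right hzk _) (mul_le_mul_right hzm _)
      _ = ((k':ℝ≥0∞)+1) * ((m':ℝ≥0∞)+1) * (T1 + T2)
          + (((k':ℝ≥0∞)+1) + ((m':ℝ≥0∞)+1)) * J := by ring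
      _ ≤ ((k':ℝ≥0∞)+1) * ((m':ℝ≥0∞)+1) * (LΦ * LΨ)
          + (((k':ℝ≥0∞)+1) + ((m':ℝ≥0∞)+1)) * J :=
        add_le_add_left (mul_le_mul_right hfub _) _
      _ = (((k':ℝ≥0∞)+1) * LΦ) * (((m':ℝ≥0∞)+1) * LΨ)
          + (((k'+m'+1 : ℕ):ℝ≥0∞)+1) * J := by push_cast; ring

/-- For `x < x₀`, `n ∈ ℕ` and `0 ≤ k ≤ n`: `|g_n(x)| ≥ |g_{n−k}(x)|·|g_k(x)|`;
in particular `|g_n(x)| ≥ |g_1(x)|^n`. -/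
theorem stmt4 (g : ℝ → ℝ) (μ : MeasureTheory.Measure ℝ) (x₀ : ℝ)
    (hg : Monotone g) (hlc : ∀ x : ℝ, ContinuousWithinAt g (Set.Iio x) x)
    (hμ : ∀ a b : ℝ, a ≤ b → μ (Set.Ico a b) = ENNReal.ofReal (g b - g a)) :
    ∀ x : ℝ, x < x₀ → ∀ n : ℕ,
      (∀ k ≤ n, |gMon μ x₀ (n - k) x| * |gMon μ x₀ k x| ≤ |gMon μ x₀ n x|) ∧
      |gMon μ x₀ 1 x| ^ n ≤ |gMon μ x₀ n x| := by

  have hfin : ∀ x, x < x₀ → μ (Set.Ico x x₀) ≠ ⊤ := fun x hx => by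
    rw [hμ x x₀ hx.le]; exact ENNReal.ofReal_ne_top
  intro x hx
  have habs : ∀ j : ℕ, |gMon μ x₀ j x| = negMon μ x₀ j x := fun j => by
    rw [abs_gMon]; exact abs_of_nonneg ((negMon_props hfin j).1 x hx)
  have main : ∀ N k m : ℕ, k + m = N →
      |gMon μ x₀ k x| * |gMon μ x₀ m x| ≤ |gMon μ x₀ N x| := by
    intro N k m hkm
    have h := N_mul hfin N k m hkm x hx
    rw [← ENNReal.ofReal_mul ((negMon_props hfin k).1 x hx)] at h
    rw [habs, habs, habs]
    exact (ENNReal.ofReal_le_ofReal_iff ((negMon_props hfin N).1 x hx)).1 h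
  have part2 : ∀ n : ℕ, |gMon μ x₀ 1 x| ^ n ≤ |gMon μ x₀ n x| := by
    intro n
    induction n with
    | zero => simp [gMon]
    | succ n ihn =>
      calc |gMon μ x₀ 1 x| ^ (n+1) = |gMon μ x₀ 1 x| ^ n * |gMon μ x₀ 1 x| := pow_succ _ _
        _ ≤ |gMon μ x₀ n x| * |gMon μ x₀ 1 x| :=
          mul_le_mul_of_nonneg_right ihn (abs_nonneg _)
        _ ≤ |gMon μ x₀ (n+1) x| := main (n+1) n 1 rfl
  intro n
  exact ⟨fun k hk => main n (n - k) k (by omega), part2 n⟩
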